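/- Let a, b ∈ ℂ be such that T = ℂ/(aℤ + ibℤ) is a torus (i.e., a and ib are linearly independent over ℝ), equipped with the quotient metric induced from the standard metric on ℂ and with the Lebesgue (Haar) measure Λ. Let f be a continuous positive real-valued function on T and let δ ∈ (0, 1/3). Let m = (∫_T f dΛ)/Λ(T) be the mean value of f, and suppose that (1−δ)·m ≤ f(x) ≤ (1+δ)·m for all x ∈ T. Then the measure fΛ (the measure with density f with respect to Λ) is 4δ(|a|+|b|)-equidistributed, i.e., fΛ is 4δ(|a|+|b|)-close to the averaged measure m·Λ: the two measures have the same total mass, and for every Borel set A ⊆ T one has ∫_A f dΛ ≤ m·Λ(V_{4δ(|a|+|b|)}(A)). -/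

import Mathlib

set_option maxHeartbeats 1000000
open scoped ENNReal


open MeasureTheory

/-- The closed `η`-neighborhood `V_η(A)` of a set `A` in a pseudometric space. -/
def nbhdV {T : Type*} [PseudoMetricSpace T] (η : ℝ) (A : Set T) : Set T :=
  {x | ∃ y ∈ A, dist x y ≤ η}

/-- Every element of `ℂ ⧸ L` has a representative of norm at most `(‖a‖+‖b‖)/2`. -/
lemma rep_small (a b : ℂ) (hab : LinearIndependent ℝ ![a, Complex.I * b])
    (L : AddSubgroup ℂ) (hL : L = AddSubgroup.closure {a, Complex.I * b}) (s : ℂ ⧸ L) :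
    ∃ z : ℂ, (z : ℂ ⧸ L) = s ∧ ‖z‖ ≤ (‖a‖ + ‖b‖) / 2 := by
  have hcard : Fintype.card (Fin 2) = Module.finrank ℝ ℂ := by
    simp [Complex.finrank_real_complex]
  set B := basisOfLinearIndependentOfCardEqFinrank hab hcard with hBdef
  have hB : ⇑B = ![a, Complex.I * b] := coe_basisOfLinearIndependentOfCardEqFinrank hab hcard
  have hB0 : B 0 = a := by rw [hB]; rfl
  have hB1 : B 1 = Complex.I * b := by rw [hB]; rfl
  obtain ⟨z₀, rfl⟩ := QuotientAddGroup.mk_surjective s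
  set u := B.repr z₀ 0 with hu
  set v := B.repr z₀ 1 with hv
  have hz₀ : u • a + v • (Complex.I * b) = z₀ := by
    have h := B.sum_repr z₀
    rw [Fin.sum_univ_two, hB0, hB1] at h
    exact h
  refine ⟨(u - round u) • a + (v - round v) • (Complex.I * b), ?_, ?_⟩
  · rw [QuotientAddGroup.eq]
    have hdiff : -((u - round u) • a + (v - round v) • (Complex.I * b)) + z₀
        = (round u : ℤ) • a + (round v : ℤ) • (Complex.I * b) := by
      rw [← hz₀, ← Int.cast_smul_eq_zsmul ℝ, ← Int.cast_smul_eq_zsmul ℝ]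
      rw [sub_smul, sub_smul]
      ring_nf
    rw [hdiff, hL]
    have hma : a ∈ AddSubgroup.closure {a, Complex.I * b} :=
      AddSubgroup.subset_closure (by simp)
    have hmb : Complex.I * b ∈ AddSubgroup.closure {a, Complex.I * b} :=
      AddSubgroup.subset_closure (by simp)
    exact add_mem (zsmul_mem hma _) (zsmul_mem hmb _)
  · have hIb : ‖Complex.I * b‖ = ‖b‖ := by
      rw [norm_mul, Complex.norm_I, one_mul]
    calc ‖(u - round u) • a + (v - round v) • (Complex.I * b)‖
        ≤ ‖(u - round u) • a‖ + ‖(v - round v) • (Complex.I * b)‖ := norm_add_le _ _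
      _ = |u - round u| * ‖a‖ + |v - round v| * ‖b‖ := by
          rw [norm_smul, norm_smul, Real.norm_eq_abs, Real.norm_eq_abs, hIb]
      _ ≤ (1/2) * ‖a‖ + (1/2) * ‖b‖ := by
          gcongr
          · exact abs_sub_round u
          · exact abs_sub_round v
      _ = (‖a‖ + ‖b‖) / 2 := by ring

lemma compact_quot (a b : ℂ) (hab : LinearIndependent ℝ ![a, Complex.I * b])
    (L : AddSubgroup ℂ) (hL : L = AddSubgroup.closure {a, Complex.I * b}) :
    CompactSpace (ℂ ⧸ L) := by
  constructor
  have himg : (Set.univ : Set (ℂ ⧸ L))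
      = (QuotientAddGroup.mk : ℂ → ℂ ⧸ L) '' Metric.closedBall 0 ((‖a‖ + ‖b‖)/2) := by
    ext s
    simp only [Set.mem_univ, true_iff, Set.mem_image]
    obtain ⟨z, hz1, hz2⟩ := rep_small a b hab L hL s
    exact ⟨z, by simpa [Metric.mem_closedBall, dist_zero_right] using hz2, hz1⟩
  rw [himg]
  exact (isCompact_closedBall _ _).image continuous_quot_mk


/-- Lemma 3.1 of Kahn–Markovic (Lemma L3 of the paper).  Let `T = ℂ/(aℤ + ibℤ)` be a
torus (so `a` and `ib` are `ℝ`-linearly independent), with the quotient metric from `ℂ`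
and the Haar (Lebesgue) measure `Λ`.  If `f : T → ℝ` is continuous, positive, and
satisfies `(1-δ) m ≤ f ≤ (1+δ) m` where `m` is the mean value of `f` and `0 < δ < 1/3`,
then the measure `f Λ` is `4δ(|a|+|b|)`-equidistributed: it has the same total mass as
`m Λ`, and `∫_A f dΛ ≤ m · Λ(V_{4δ(|a|+|b|)}(A))` for every Borel set `A`. -/
theorem torus_equidistribution (a b : ℂ)
    (hab : LinearIndependent ℝ ![a, Complex.I * b])
    (L : AddSubgroup ℂ) (hL : L = AddSubgroup.closure {a, Complex.I * b})
    [MeasurableSpace (ℂ ⧸ L)] [BorelSpace (ℂ ⧸ L)]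
    (Λ : Measure (ℂ ⧸ L)) [Λ.IsAddHaarMeasure]
    (f : ℂ ⧸ L → ℝ) (hf : Continuous f) (hfpos : ∀ x, 0 < f x)
    (δ : ℝ) (hδ0 : 0 < δ) (hδ : δ < 1 / 3)
    (m : ℝ) (hm : m = (∫ x, f x ∂Λ) / (Λ Set.univ).toReal)
    (hlow : ∀ x, (1 - δ) * m ≤ f x) (hhigh : ∀ x, f x ≤ (1 + δ) * m) :
    (∫ x, f x ∂Λ) = m * (Λ Set.univ).toReal ∧
    ∀ A : Set (ℂ ⧸ L), MeasurableSet A →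
      ∫ x in A, f x ∂Λ
        ≤ m * (Λ (nbhdV (4 * δ * (‖a‖ + ‖b‖)) A)).toReal := by
  haveI : CompactSpace (ℂ ⧸ L) := compact_quot a b hab L hL
  haveI : IsFiniteMeasure Λ := ⟨isCompact_univ.measure_lt_top⟩
  have hTne : Λ Set.univ ≠ ⊤ := measure_ne_top Λ _
  have hTpos : 0 < Λ Set.univ := isOpen_univ.measure_pos Λ ⟨0, trivial⟩
  have hvT : 0 < (Λ Set.univ).toReal := ENNReal.toReal_pos hTpos.ne' hTne
  have hm0 : 0 < m := by
    have h1 := hfpos 0; have h2 := hhigh 0; nlinarith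
  have hint : Integrable f Λ := by
    refine ⟨hf.aestronglyMeasurable,
      HasFiniteIntegral.of_bounded (C := (1+δ)*m) (Filter.Eventually.of_forall fun x => ?_)⟩
    rw [Real.norm_eq_abs, abs_of_pos (hfpos x)]
    exact hhigh x
  have hmass : (∫ x, f x ∂Λ) = m * (Λ Set.univ).toReal := by
    rw [hm]; field_simp
  refine ⟨hmass, fun A hA => ?_⟩
  -- setup
  have hnorm : ‖a‖ + ‖b‖ = ‖a‖ + ‖b‖ := by
    rfl
  set η : ℝ := 4 * δ * (‖a‖ + ‖b‖) with hηdef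
  have ha0 : a ≠ 0 := by
    have := hab.ne_zero 0; simpa using this
  have hs0 : (0:ℝ) < ‖a‖ + ‖b‖ := by
    have : 0 < ‖a‖ := norm_pos_iff.2 ha0
    have := norm_nonneg b; linarith
  have hη : 0 < η := by rw [hηdef, hnorm]; positivity
  set V : Set (ℂ ⧸ L) := nbhdV η A with hVdef
  set As : ℂ ⧸ L → Set (ℂ ⧸ L) := fun s => (· + s) ⁻¹' A with hAsdef
  have hAs_meas : ∀ s, MeasurableSet (As s) := fun s =>
    hA.preimage (measurable_add_const s)
  have hAs_vol : ∀ s, Λ (As s) = Λ A := fun s => measure_preimage_add_right Λ s A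
  have hAsub : A ⊆ V := fun x hx => ⟨x, hx, by simp [hη.le]⟩
  have hVne : Λ V ≠ ⊤ := (lt_of_le_of_lt (measure_mono (Set.subset_univ _))
    (measure_lt_top Λ _)).ne
  -- one step
  have hstep : ∀ w : ℂ, ‖w‖ ≤ η → Λ A + Λ (A \ As ↑w) ≤ Λ V := by
    intro w hw
    have hsub2 : As ↑w ⊆ V := by
      intro x hx
      refine ⟨x + ↑w, hx, ?_⟩
      rw [dist_eq_norm]
      have : x - (x + (↑w : ℂ ⧸ L)) = -(↑w) := by abel
      rw [this, norm_neg]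
      exact (QuotientAddGroup.norm_mk_le_norm : ‖((w:ℂ) : ℂ ⧸ L)‖ ≤ ‖w‖).trans hw
    calc Λ A + Λ (A \ As ↑w) = Λ (As ↑w) + Λ (A \ As ↑w) := by rw [hAs_vol]
      _ = Λ (As ↑w ∪ (A \ As ↑w)) :=
          (measure_union' Set.disjoint_sdiff_right (hAs_meas _)).symm
      _ = Λ (A ∪ As ↑w) := by rw [Set.union_diff_self, Set.union_comm]
      _ ≤ Λ V := measure_mono (Set.union_subset hAsub hsub2)
  -- chaining
  have hchain : ∀ (t : ℂ ⧸ L) (k : ℕ), Λ (A \ As (k • t)) ≤ k * Λ (A \ As t) := by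
    intro t k
    induction k with
    | zero => simp [hAsdef]
    | succ k ih =>
      have key : A \ As ((k+1) • t) ⊆ (A \ As (k • t)) ∪ (As (k • t) \ As ((k+1) • t)) := by
        rintro x ⟨hx1, hx2⟩
        by_cases h : x ∈ As (k • t)
        · exact Or.inr ⟨h, hx2⟩
        · exact Or.inl ⟨hx1, h⟩
      have heq : As (k • t) \ As ((k+1) • t) = (· + k • t) ⁻¹' (A \ As t) := by
        ext x
        simp only [hAsdef, Set.mem_diff, Set.mem_preimage, succ_nsmul, add_assoc]
      calc Λ (A \ As ((k+1) • t))
          ≤ Λ (A \ As (k • t)) + Λ (As (k • t) \ As ((k+1) • t)) :=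
            (measure_mono key).trans (measure_union_le _ _)
        _ ≤ k * Λ (A \ As t) + Λ (A \ As t) := by
            rw [heq, measure_preimage_add_right]
            exact add_le_add ih le_rfl
        _ = (k+1 : ℕ) * Λ (A \ As t) := by push_cast; ring
  -- uniform bound
  set R : ℝ := (‖a‖ + ‖b‖) / 2 with hRdef
  set N : ℕ := ⌊R / η⌋₊ + 1 with hNdef
  have hall : ∀ s : ℂ ⧸ L, Λ (A \ As s) ≤ (N : ℝ≥0∞) * (Λ V - Λ A) := by
    intro s
    obtain ⟨z, rfl, hz⟩ := rep_small a b hab L hL s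
    have hN0 : (0:ℝ) < N := by positivity
    set w : ℂ := (N:ℝ)⁻¹ • z with hwdef
    have hw : ‖w‖ ≤ η := by
      rw [hwdef, norm_smul, norm_inv, Real.norm_natCast]
      have h1 : R / η < N := by
        rw [hNdef]; push_cast; exact Nat.lt_floor_add_one _
      rw [inv_mul_le_iff₀ hN0]
      have : R < N * η := by
        rw [div_lt_iff₀ hη] at h1; linarith
      linarith [hz]
    have hzw : (N : ℕ) • w = z := by
      rw [hwdef, ← Nat.cast_smul_eq_nsmul ℝ, smul_smul]
      field_simp
      exact one_smul _ _
    have hmk : ((z : ℂ) : ℂ ⧸ L) = (N : ℕ) • ((w : ℂ) : ℂ ⧸ L) := by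
      rw [← hzw]
      exact (map_nsmul (QuotientAddGroup.mk' L) N w).symm ▸ rfl
    rw [hmk]
    calc Λ (A \ As ((N : ℕ) • (↑w : ℂ ⧸ L))) ≤ N * Λ (A \ As ↑w) := hchain _ _
      _ ≤ N * (Λ V - Λ A) :=
          mul_le_mul_right (ENNReal.le_sub_of_add_le_left (measure_ne_top Λ A) (hstep w hw)) _
  -- Fubini
  have hmeas2 : Measurable (fun p : (ℂ ⧸ L) × (ℂ ⧸ L) =>
      A.indicator (1 : (ℂ ⧸ L) → ℝ≥0∞) p.1 * Aᶜ.indicator (1 : (ℂ ⧸ L) → ℝ≥0∞) (p.1 + p.2)) :=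
    ((measurable_const.indicator hA).comp measurable_fst).mul
      ((measurable_const.indicator hA.compl).comp (measurable_fst.add measurable_snd))
  have hfub : ∫⁻ s, Λ (A \ As s) ∂Λ = Λ A * Λ Aᶜ := by
    have h1 : ∀ s : ℂ ⧸ L, Λ (A \ As s)
        = ∫⁻ x, A.indicator (1 : (ℂ ⧸ L) → ℝ≥0∞) x * Aᶜ.indicator 1 (x + s) ∂Λ := by
      intro s
      rw [← lintegral_indicator_one (hA.diff (hAs_meas s))]
      refine lintegral_congr fun x => ?_
      by_cases h1 : x ∈ A <;> by_cases h2 : x + s ∈ A <;>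
        simp [Set.indicator_apply, hAsdef, Set.mem_preimage, Set.mem_diff, h1, h2]
    calc ∫⁻ s, Λ (A \ As s) ∂Λ
        = ∫⁻ s, ∫⁻ x, A.indicator (1 : (ℂ ⧸ L) → ℝ≥0∞) x * Aᶜ.indicator 1 (x + s) ∂Λ ∂Λ :=
          lintegral_congr h1
      _ = ∫⁻ x, ∫⁻ s, A.indicator (1 : (ℂ ⧸ L) → ℝ≥0∞) x * Aᶜ.indicator 1 (x + s) ∂Λ ∂Λ :=
          (lintegral_lintegral_swap hmeas2.aemeasurable).symm
      _ = ∫⁻ x, A.indicator (1 : (ℂ ⧸ L) → ℝ≥0∞) x * Λ Aᶜ ∂Λ := by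
          refine lintegral_congr fun x => ?_
          rw [lintegral_const_mul' _ _ (by by_cases h : x ∈ A <;> simp [h] : A.indicator (1 : (ℂ ⧸ L) → ℝ≥0∞) x ≠ ⊤)]
          congr 1
          have hx : ∀ s, Aᶜ.indicator (1 : (ℂ ⧸ L) → ℝ≥0∞) (x + s)
              = ((x + ·) ⁻¹' Aᶜ).indicator 1 s := by
            intro s; by_cases h : x + s ∈ A <;> simp [Set.indicator_apply, h]
          rw [lintegral_congr hx,
            lintegral_indicator_one (hA.compl.preimage (measurable_const_add x)),
            measure_preimage_add]
      _ = Λ A * Λ Aᶜ := by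
          rw [lintegral_mul_const' _ _ (measure_ne_top Λ Aᶜ), lintegral_indicator_one hA]
  -- convert to reals
  set vA := (Λ A).toReal with hvAdef
  set vC := (Λ Aᶜ).toReal with hvCdef
  set vV := (Λ V).toReal with hvVdef
  have hAne := measure_ne_top Λ A
  have hCne := measure_ne_top Λ Aᶜ
  have hAV : Λ A ≤ Λ V := measure_mono hAsub
  have hvAV : vA ≤ vV := ENNReal.toReal_mono hVne hAV
  have hsplit : vA + vC = (Λ Set.univ).toReal := by
    rw [hvAdef, hvCdef, ← ENNReal.toReal_add hAne hCne, measure_add_measure_compl hA]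
  have hnnA : 0 ≤ vA := ENNReal.toReal_nonneg
  have hnnC : 0 ≤ vC := ENNReal.toReal_nonneg
  have hkey : vA * vC ≤ (N : ℝ) * (vV - vA) * (Λ Set.univ).toReal := by
    have h2 : Λ A * Λ Aᶜ ≤ ((N : ℝ≥0∞) * (Λ V - Λ A)) * Λ Set.univ := by
      rw [← hfub]
      calc ∫⁻ s, Λ (A \ As s) ∂Λ ≤ ∫⁻ _, (N : ℝ≥0∞) * (Λ V - Λ A) ∂Λ := lintegral_mono hall
        _ = ((N : ℝ≥0∞) * (Λ V - Λ A)) * Λ Set.univ := lintegral_const _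
    have hfin : ((N : ℝ≥0∞) * (Λ V - Λ A)) * Λ Set.univ ≠ ⊤ :=
      ENNReal.mul_ne_top (ENNReal.mul_ne_top (ENNReal.natCast_ne_top N)
        (ENNReal.sub_ne_top hVne)) hTne
    have h3 := ENNReal.toReal_mono hfin h2
    rwa [ENNReal.toReal_mul, ENNReal.toReal_mul, ENNReal.toReal_mul,
      ENNReal.toReal_natCast, ENNReal.toReal_sub_of_le hAV hVne] at h3
  have hNle : (N : ℝ) ≤ 1 / (8 * δ) + 1 := by
    have h1 : (⌊R / η⌋₊ : ℝ) ≤ R / η := Nat.floor_le (by positivity)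
    have h2 : R / η = 1 / (8 * δ) := by
      have hne : ‖a‖ + ‖b‖ ≠ 0 := ne_of_gt hs0
      have hδne : δ ≠ 0 := ne_of_gt hδ0
      rw [hRdef, hηdef, hnorm]
      field_simp
      ring
    have h1' := h1.trans_eq h2
    rw [hNdef]; push_cast; linarith
  have hVlb : vA + δ * min vA vC ≤ vV := by
    have he0 : 0 ≤ vV - vA := by linarith
    have hN0' : (0:ℝ) ≤ N := Nat.cast_nonneg N
    have hminT : min vA vC * (Λ Set.univ).toReal ≤ 2 * (vA * vC) := by
      rcases le_total vA vC with h | h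
      · rw [min_eq_left h]; nlinarith
      · rw [min_eq_right h]; nlinarith
    have h3 : min vA vC * (Λ Set.univ).toReal
        ≤ (2 * ((N:ℝ) * (vV - vA))) * (Λ Set.univ).toReal := by nlinarith
    have h4 : min vA vC ≤ 2 * ((N:ℝ) * (vV - vA)) := le_of_mul_le_mul_right h3 hvT
    have h7 : 2 * (N:ℝ) * δ ≤ 1 := by
      have : 2 * (N:ℝ) * δ ≤ 2 * (1/(8*δ)+1) * δ := by nlinarith
      have h8 : 2 * (1/(8*δ)+1) * δ = 1/4 + 2*δ := by field_simp; ring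
      nlinarith
    nlinarith [mul_le_mul_of_nonneg_left h4 hδ0.le]
  -- integral estimates
  have hi1 : ∫ x in A, f x ∂Λ ≤ (1 + δ) * m * vA := by
    have h := setIntegral_mono_on hint.integrableOn
      (integrableOn_const (measure_lt_top Λ A).ne) hA (fun x _ => hhigh x)
    rwa [setIntegral_const, smul_eq_mul, measureReal_def, mul_comm] at h
  have hi2 : ∫ x in A, f x ∂Λ ≤ m * vA + δ * m * vC := by
    have hcompl := integral_add_compl hA hint
    have h := setIntegral_mono_on
      (integrableOn_const (measure_lt_top Λ Aᶜ).ne) hint.integrableOn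
      hA.compl (fun x _ => hlow x)
    rw [setIntegral_const, smul_eq_mul, measureReal_def] at h
    have h9 : ∫ x in A, f x ∂Λ = m * (Λ Set.univ).toReal - ∫ x in Aᶜ, f x ∂Λ := by
      rw [← hmass]; linarith
    rw [h9, ← hsplit]
    nlinarith
  rcases le_total vA vC with h | h
  · rw [min_eq_left h] at hVlb
    have h10 := mul_le_mul_of_nonneg_left hVlb hm0.le
    nlinarith [hi1]
  · rw [min_eq_right h] at hVlb
    have h10 := mul_le_mul_of_nonneg_left hVlb hm0.le
    nlinarith [hi2]
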